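/- For every positive integer m, the binary sequence (100)^m 1001 of length 3m+4 is a robust positioning sequence of strength 3m+2 and distance 2m+1: any two of its three contiguous subwords of length 3m+2 have Hamming distance at least 2m+1. -/

import Mathlib

/-- The contiguous length-`n` window of the sequence `s` starting at position `i`. -/
def window {α : Type*} (s : ℕ → α) (n i : ℕ) : Fin n → α := fun k => s (i + k)

/-- `s` (restricted to its first `N` entries) is a robust positioning sequence of strength `n`
and distance `d`. -/
def IsRPS {α : Type*} [DecidableEq α] (s : ℕ → α) (N n d : ℕ) : Prop :=
  ∀ i j : ℕ, i + n ≤ N → j + n ≤ N → i ≠ j →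
    d ≤ hammingDist (window s n i) (window s n j)

lemma key_rps (m a b o0 o1 : ℕ) (ho0 : o0 < 2) (ho1 : o1 < 3) (hne : o0 ≠ o1)
    (hd0 : ¬(((a + o0) % 3 = 0) ↔ ((b + o0) % 3 = 0)))
    (hd1 : ¬(((a + o1) % 3 = 0) ↔ ((b + o1) % 3 = 0))) :
    2 * m + 1 ≤ hammingDist (window (fun j => decide (j % 3 = 0)) (3 * m + 2) a)
      (window (fun j => decide (j % 3 = 0)) (3 * m + 2) b) := by
  rw [hammingDist]
  have hcard : (Finset.univ : Finset (Fin (2 * m + 1))).card = 2 * m + 1 := by simp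
  rw [← hcard]
  apply Finset.card_le_card_of_injOn
    (fun t => (⟨3 * (t.val / 2) + (if t.val % 2 = 0 then o0 else o1), by
      have := t.isLt; split_ifs <;> omega⟩ : Fin (3 * m + 2)))
  · intro t _
    simp only [Finset.mem_coe, Finset.mem_filter, Finset.mem_univ, true_and, window, ne_eq,
      decide_eq_decide]
    split_ifs <;> omega
  · intro t _ t' _ h
    have hv := congrArg Fin.val h
    simp only at hv
    apply Fin.ext
    split_ifs at hv <;> omega

/-- For every positive integer `m`, the binary sequence `(100)^m 1001` of length `3m+4`
(whose `j`-th entry is `1` iff `j ≡ 0 (mod 3)`) is a robust positioning sequence of strength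
`3m+2` and distance `2m+1`. -/
theorem seq_100_1001_is_rps (m : ℕ) (hm : 1 ≤ m) :
    IsRPS (fun j => decide (j % 3 = 0)) (3 * m + 4) (3 * m + 2) (2 * m + 1) := by
  intro i j hi hj hij
  have hi2 : i ≤ 2 := by omega
  have hj2 : j ≤ 2 := by omega
  interval_cases i <;> interval_cases j <;> first
    | omega
    | exact key_rps m _ _ 0 2 (by omega) (by omega) (by omega) (by omega) (by omega)
    | exact key_rps m _ _ 0 1 (by omega) (by omega) (by omega) (by omega) (by omega)
    | exact key_rps m _ _ 1 2 (by omega) (by omega) (by omega) (by omega) (by omega)
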